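/- Let F be a contravariant functor from the category of (unital, associative, possibly noncommutative) rings to the category of sets such that the restriction of F to the full subcategory of commutative rings is naturally isomorphic to the prime spectrum functor Spec. Then for every natural number n ≥ 3, the set F(Mₙ(ℂ)) is empty, where Mₙ(ℂ) denotes the ring of n × n complex matrices (Matrix (Fin n) (Fin n) ℂ). -/

import Mathlib

open CategoryTheory

/-- The prime spectrum, as a contravariant functor from commutative rings to sets. -/
def SpecFunctor : CommRingCatᵒᵖ ⥤ Type where
  obj C := PrimeSpectrum C.unop
  map f := TypeCat.ofHom fun P => ⟨P.asIdeal.comap f.unop.hom, P.isPrime.comap _⟩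

namespace NoSpec
open Matrix

section part1
variable (F : RingCatᵒᵖ ⥤ Type) (h : (forget₂ CommRingCat RingCat).op ⋙ F ≅ SpecFunctor)
variable {R : Type} [Ring R] (x : F.obj (Opposite.op (RingCat.of R)))

def commSub (C : Subring R) (hC : ∀ a ∈ C, ∀ b ∈ C, a * b = b * a) : CommRing C :=
  { (inferInstance : Ring C) with
    mul_comm := fun a b => Subtype.ext (hC a a.2 b b.2) }

def thePrime (C : Subring R) (hC : ∀ a ∈ C, ∀ b ∈ C, a * b = b * a) :
    @PrimeSpectrum C (commSub C hC).toCommSemiring :=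
  (show SpecFunctor.obj (Opposite.op (@CommRingCat.of C (commSub C hC))) from
    h.hom.app (Opposite.op (@CommRingCat.of C (commSub C hC)))
    (F.map (RingCat.ofHom C.subtype).op x))

def inPrime (C : Subring R) (hC : ∀ a ∈ C, ∀ b ∈ C, a * b = b * a) (a : R) (ha : a ∈ C) :
    Prop :=
  letI := commSub C hC
  (⟨a, ha⟩ : C) ∈ (thePrime F h x C hC).asIdeal

theorem inPrime_compat (C C' : Subring R) (hC : ∀ a ∈ C, ∀ b ∈ C, a * b = b * a)
    (hC' : ∀ a ∈ C', ∀ b ∈ C', a * b = b * a) (hle : C ≤ C') (a : R) (ha : a ∈ C) :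
    inPrime F h x C hC a ha ↔ inPrime F h x C' hC' a (hle ha) := by
  letI i1 := commSub C hC
  letI i2 := commSub C' hC'
  let ι : @CommRingCat.of C i1 ⟶ @CommRingCat.of C' i2 :=
    @CommRingCat.ofHom _ _ i1 i2 (Subring.inclusion hle)
  have hnat := (NatTrans.naturality_apply h.hom ι.op) (F.map (RingCat.ofHom C'.subtype).op x)
  have hcomp : (F.map (RingCat.ofHom C'.subtype).op ≫
      F.map ((forget₂ CommRingCat RingCat).map ι).op) x =
      F.map (RingCat.ofHom C.subtype).op x := by
    erw [← F.map_comp, ← op_comp]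
    rfl
  have key : thePrime F h x C hC = SpecFunctor.map ι.op (thePrime F h x C' hC') := by
    dsimp only [thePrime]
    rw [← hcomp]
    exact hnat
  rw [inPrime, inPrime, key]
  exact Iff.rfl

theorem closure_comm (s : Set R) (hs : ∀ a ∈ s, ∀ b ∈ s, a * b = b * a) :
    ∀ a ∈ Subring.closure s, ∀ b ∈ Subring.closure s, a * b = b * a := by
  intro a ha b hb
  letI := Subring.closureCommRingOfComm hs
  exact congrArg Subtype.val (mul_comm (⟨a, ha⟩ : Subring.closure s) ⟨b, hb⟩)

theorem singleton_comm (a : R) : ∀ u ∈ ({a} : Set R), ∀ v ∈ ({a} : Set R), u * v = v * u := by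
  intro u hu v hv
  rw [Set.mem_singleton_iff] at hu hv
  rw [hu, hv]

def IsTrue (a : R) : Prop :=
  ¬ inPrime F h x (Subring.closure {a}) (closure_comm _ (singleton_comm a)) a
      (Subring.subset_closure rfl)

theorem isTrue_iff (C : Subring R) (hC : ∀ a ∈ C, ∀ b ∈ C, a * b = b * a) (a : R)
    (ha : a ∈ C) : IsTrue F h x a ↔ ¬ inPrime F h x C hC a ha := by
  have hle : Subring.closure {a} ≤ C := by
    rw [Subring.closure_le]
    intro y hy
    rw [Set.mem_singleton_iff] at hy
    rw [hy]; exact ha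
  rw [IsTrue, inPrime_compat F h x _ C _ hC hle a (Subring.subset_closure rfl)]

theorem exists_unique_isTrue {k : ℕ} (f : Fin k → R)
    (horth : ∀ i j, i ≠ j → f i * f j = 0) (hsum : ∑ i, f i = 1) :
    ∃! i, IsTrue F h x (f i) := by
  set C := Subring.closure (Set.range f) with hCdef
  have hcomm : ∀ a ∈ Set.range f, ∀ b ∈ Set.range f, a * b = b * a := by
    rintro a ⟨i, rfl⟩ b ⟨j, rfl⟩
    by_cases hij : i = j
    · rw [hij]
    · rw [horth i j hij, horth j i (Ne.symm hij)]
  have hC := closure_comm (Set.range f) hcomm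
  have hmem : ∀ i, f i ∈ C := fun i => Subring.subset_closure ⟨i, rfl⟩
  letI := commSub C hC
  have hkey : ∀ i, IsTrue F h x (f i) ↔
      ¬ (⟨f i, hmem i⟩ : C) ∈ (thePrime F h x C hC).asIdeal := fun i =>
    isTrue_iff F h x C hC (f i) (hmem i)
  have hprime : (thePrime F h x C hC).asIdeal.IsPrime := (thePrime F h x C hC).isPrime
  have hsum' : (∑ i, (⟨f i, hmem i⟩ : C)) = 1 := by
    apply Subtype.coe_injective
    exact (map_sum C.subtype (fun i => (⟨f i, hmem i⟩ : C)) Finset.univ).trans hsum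
  have hex : ∃ i, IsTrue F h x (f i) := by
    by_contra hall
    push_neg at hall
    have : (1 : C) ∈ (thePrime F h x C hC).asIdeal := by
      rw [← hsum']
      apply Ideal.sum_mem
      intro i _
      have := (hkey i).not.mp (by simpa using hall i)
      simpa using this
    exact hprime.ne_top (Ideal.eq_top_of_isUnit_mem _ this isUnit_one)
  obtain ⟨i, hi⟩ := hex
  refine ⟨i, hi, fun j hj => ?_⟩
  by_contra hij
  have hzero : (⟨f j, hmem j⟩ : C) * ⟨f i, hmem i⟩ = 0 := by
    apply Subtype.coe_injective
    exact horth j i hij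
  rcases hprime.mem_or_mem (hzero ▸ (thePrime F h x C hC).asIdeal.zero_mem) with hc | hc
  · exact (hkey j).mp hj hc
  · exact (hkey i).mp hi hc

end part1

section part2
variable {n : ℕ} (ι : Fin 3 → Fin n)

noncomputable def emb (m : Matrix (Fin 3) (Fin 3) ℤ) : Matrix (Fin n) (Fin n) ℂ :=
  ∑ k, ∑ l, (m k l : ℂ) • Matrix.single (ι k) (ι l) 1

theorem emb_add (m m' : Matrix (Fin 3) (Fin 3) ℤ) :
    emb ι (m + m') = emb ι m + emb ι m' := by
  simp [emb, add_smul, Finset.sum_add_distrib]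

theorem emb_zero : emb ι 0 = 0 := by
  simp [emb]

theorem single_mul_emb (hι : Function.Injective ι) (k l : Fin 3) (c : ℂ)
    (m' : Matrix (Fin 3) (Fin 3) ℤ) :
    (c • single (ι k) (ι l) (1 : ℂ)) * emb ι m' =
      ∑ l', (c * (m' l l' : ℂ)) • single (ι k) (ι l') 1 := by
  rw [emb, Finset.mul_sum]
  rw [Finset.sum_eq_single l]
  · rw [Finset.mul_sum]
    apply Finset.sum_congr rfl
    intro l' _
    rw [smul_mul_smul_comm, single_mul_single_same, one_mul]
  · intro k' _ hk'
    rw [Finset.mul_sum]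
    apply Finset.sum_eq_zero
    intro l' _
    rw [smul_mul_smul_comm, single_mul_single_of_ne (h := fun hc => hk' (hι hc).symm),
      smul_zero]
  · intro habs
    exact absurd (Finset.mem_univ l) habs

theorem emb_mul (hι : Function.Injective ι) (m m' : Matrix (Fin 3) (Fin 3) ℤ) :
    emb ι m * emb ι m' = emb ι (m * m') := by
  calc emb ι m * emb ι m'
      = ∑ k, ∑ l, ((m k l : ℂ) • single (ι k) (ι l) 1) * emb ι m' := by
        rw [emb, Finset.sum_mul]
        exact Finset.sum_congr rfl fun k _ => Finset.sum_mul _ _ _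
    _ = ∑ k, ∑ l, ∑ l', ((m k l : ℂ) * (m' l l' : ℂ)) • single (ι k) (ι l') 1 := by
        apply Finset.sum_congr rfl; intro k _
        apply Finset.sum_congr rfl; intro l _
        exact single_mul_emb ι hι k l _ m'
    _ = ∑ k, ∑ l', ((m * m') k l' : ℂ) • single (ι k) (ι l') 1 := by
        apply Finset.sum_congr rfl; intro k _
        rw [Finset.sum_comm]
        apply Finset.sum_congr rfl; intro l' _
        rw [Matrix.mul_apply]
        push_cast
        rw [Finset.sum_smul]
    _ = emb ι (m * m') := rfl

theorem sum_std_diag {N : ℕ} : ∑ i : Fin N, single i i (1:ℂ) = 1 := by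
  ext a b
  simp [Matrix.sum_apply, single, Matrix.one_apply, ite_and, Finset.sum_ite_eq]

end part2

def KM1 : Matrix (Fin 3) (Fin 3) ℤ := !![0,0,0;1,1,0;-1,-1,0]
def KM2 : Matrix (Fin 3) (Fin 3) ℤ := !![1,0,0;-1,0,0;-1,0,0]
def KM3 : Matrix (Fin 3) (Fin 3) ℤ := !![0,0,0;0,0,0;1,1,1]
def KM4 : Matrix (Fin 3) (Fin 3) ℤ := !![1,0,0;-1,0,0;0,0,0]
def KM5 : Matrix (Fin 3) (Fin 3) ℤ := !![0,0,0;0,0,0;0,1,1]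
def KM7 : Matrix (Fin 3) (Fin 3) ℤ := !![0,0,0;0,1,0;0,-1,0]
def KM8 : Matrix (Fin 3) (Fin 3) ℤ := !![1,0,0;0,0,0;-1,0,0]
def KM9 : Matrix (Fin 3) (Fin 3) ℤ := !![1,0,0;0,0,0;0,0,0]
def KM17 : Matrix (Fin 3) (Fin 3) ℤ := !![0,0,0;0,0,0;1,0,1]
def KM18 : Matrix (Fin 3) (Fin 3) ℤ := !![0,0,0;1,1,0;0,0,0]
def KM19 : Matrix (Fin 3) (Fin 3) ℤ := !![0,0,0;0,0,0;0,0,1]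
def KM21 : Matrix (Fin 3) (Fin 3) ℤ := !![0,0,0;0,1,0;0,0,0]
def KM23 : Matrix (Fin 3) (Fin 3) ℤ := !![0,0,0;0,0,0;0,-1,1]
def KM24 : Matrix (Fin 3) (Fin 3) ℤ := !![0,0,0;1,1,0;1,1,0]
def KM31 : Matrix (Fin 3) (Fin 3) ℤ := !![0,-1,0;0,1,0;0,1,0]
def KM32 : Matrix (Fin 3) (Fin 3) ℤ := !![1,1,0;0,0,0;-1,-1,0]
def KM33 : Matrix (Fin 3) (Fin 3) ℤ := !![1,1,0;0,0,0;0,0,0]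
def KM41 : Matrix (Fin 3) (Fin 3) ℤ := !![0,-1,0;0,1,0;0,0,0]
def KM57 : Matrix (Fin 3) (Fin 3) ℤ := !![0,0,0;-1,0,-1;1,0,1]
def KM59 : Matrix (Fin 3) (Fin 3) ℤ := !![0,0,0;0,0,-1;0,0,1]
def KM60 : Matrix (Fin 3) (Fin 3) ℤ := !![0,0,0;1,1,1;0,0,0]
def KM62 : Matrix (Fin 3) (Fin 3) ℤ := !![0,0,0;0,1,1;0,0,0]
def KM75 : Matrix (Fin 3) (Fin 3) ℤ := !![-1,-1,-1;1,1,1;1,1,1]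
def KM91 : Matrix (Fin 3) (Fin 3) ℤ := !![1,1,1;0,0,0;0,0,0]
def KM119 : Matrix (Fin 3) (Fin 3) ℤ := !![0,0,0;0,1,-1;0,0,0]
def KM120 : Matrix (Fin 3) (Fin 3) ℤ := !![0,0,0;1,0,1;1,0,1]
def KM127 : Matrix (Fin 3) (Fin 3) ℤ := !![0,0,-1;0,0,1;0,0,1]
def KM128 : Matrix (Fin 3) (Fin 3) ℤ := !![1,0,1;-1,0,-1;0,0,0]
def KM131 : Matrix (Fin 3) (Fin 3) ℤ := !![1,0,1;0,0,0;0,0,0]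
def KM139 : Matrix (Fin 3) (Fin 3) ℤ := !![0,0,-1;0,0,0;0,0,1]
def KM154 : Matrix (Fin 3) (Fin 3) ℤ := !![0,-1,1;0,1,-1;0,0,0]
def KM158 : Matrix (Fin 3) (Fin 3) ℤ := !![0,1,-1;0,0,0;0,-1,1]

def KM9c : Matrix (Fin 3) (Fin 3) ℤ := !![0,0,0;0,1,0;0,0,1]

theorem emb_KM9 {n : ℕ} (ι : Fin 3 → Fin n) :
    emb ι KM9 = single (ι 0) (ι 0) 1 := by
  simp [KM9, emb, Fin.sum_univ_three, Matrix.cons_val_zero, Matrix.cons_val_one,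
    Matrix.head_cons, Matrix.cons_val_two, Matrix.tail_cons, Matrix.head_fin_const,
    Matrix.vecHead, Matrix.vecTail]

def X3 (Pa Pb Pc : Prop) : Prop :=
  (Pa ∨ Pb ∨ Pc) ∧ ¬(Pa ∧ Pb) ∧ ¬(Pa ∧ Pc) ∧ ¬(Pb ∧ Pc)

section part3
variable (F : RingCatᵒᵖ ⥤ Type) (h : (forget₂ CommRingCat RingCat).op ⋙ F ≅ SpecFunctor)
variable {n : ℕ} (x : F.obj (Opposite.op (RingCat.of (Matrix (Fin n) (Fin n) ℂ))))
variable (ι : Fin 3 → Fin n)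

theorem emb_mul_q (hι : Function.Injective ι) (D : Matrix (Fin 3) (Fin 3) ℤ) :
    emb ι D * (1 - emb ι 1) = 0 := by
  rw [mul_sub, mul_one, emb_mul ι hι, mul_one, sub_self]

theorem q_mul_emb (hι : Function.Injective ι) (D : Matrix (Fin 3) (Fin 3) ℤ) :
    (1 - emb ι 1) * emb ι D = 0 := by
  rw [sub_mul, one_mul, emb_mul ι hι, one_mul, sub_self]

theorem qFalse (hι : Function.Injective ι) (A B : Matrix (Fin 3) (Fin 3) ℤ) (hsum : A + B = 1)
    (hAB : A * B = 0) (hBA : B * A = 0)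
    (hanchor : IsTrue F h x (emb ι A)) : ¬ IsTrue F h x (1 - emb ι 1) := by
  intro hqT
  have horth : ∀ i j, i ≠ j →
      (![emb ι A, emb ι B, 1 - emb ι 1] i) * (![emb ι A, emb ι B, 1 - emb ι 1] j) = 0 := by
    intro i j hij
    fin_cases i <;> fin_cases j
    · exact absurd rfl hij
    · show emb ι A * emb ι B = 0; rw [emb_mul ι hι, hAB]; exact emb_zero ι
    · exact emb_mul_q ι hι A
    · show emb ι B * emb ι A = 0; rw [emb_mul ι hι, hBA]; exact emb_zero ι
    · exact absurd rfl hij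
    · exact emb_mul_q ι hι B
    · exact q_mul_emb ι hι A
    · exact q_mul_emb ι hι B
    · exact absurd rfl hij
  have hsum3 : ∑ i, ![emb ι A, emb ι B, 1 - emb ι 1] i = 1 := by
    rw [Fin.sum_univ_three]
    show emb ι A + emb ι B + (1 - emb ι 1) = 1
    rw [← emb_add, hsum]
    abel
  obtain ⟨i, hi, hu⟩ := exists_unique_isTrue F h x _ horth hsum3
  have h0 : (0 : Fin 3) = i := hu 0 hanchor
  have h2 : (2 : Fin 3) = i := hu 2 hqT
  exact absurd (h0.trans h2.symm) (by decide)

theorem quadFact (hι : Function.Injective ι) (hq : ¬ IsTrue F h x (1 - emb ι 1)) (A B C : Matrix (Fin 3) (Fin 3) ℤ)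
    (hsum : A + B + C = 1) (hAB : A * B = 0) (hBA : B * A = 0) (hAC : A * C = 0)
    (hCA : C * A = 0) (hBC : B * C = 0) (hCB : C * B = 0) :
    X3 (IsTrue F h x (emb ι A)) (IsTrue F h x (emb ι B)) (IsTrue F h x (emb ι C)) := by
  have horth : ∀ i j, i ≠ j →
      (![emb ι A, emb ι B, emb ι C, 1 - emb ι 1] i) *
      (![emb ι A, emb ι B, emb ι C, 1 - emb ι 1] j) = 0 := by
    intro i j hij
    fin_cases i <;> fin_cases j
    · exact absurd rfl hij
    · show emb ι A * emb ι B = 0; rw [emb_mul ι hι, hAB]; exact emb_zero ι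
    · show emb ι A * emb ι C = 0; rw [emb_mul ι hι, hAC]; exact emb_zero ι
    · exact emb_mul_q ι hι A
    · show emb ι B * emb ι A = 0; rw [emb_mul ι hι, hBA]; exact emb_zero ι
    · exact absurd rfl hij
    · show emb ι B * emb ι C = 0; rw [emb_mul ι hι, hBC]; exact emb_zero ι
    · exact emb_mul_q ι hι B
    · show emb ι C * emb ι A = 0; rw [emb_mul ι hι, hCA]; exact emb_zero ι
    · show emb ι C * emb ι B = 0; rw [emb_mul ι hι, hCB]; exact emb_zero ι
    · exact absurd rfl hij
    · exact emb_mul_q ι hι C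
    · exact q_mul_emb ι hι A
    · exact q_mul_emb ι hι B
    · exact q_mul_emb ι hι C
    · exact absurd rfl hij
  have hsum4 : ∑ i, ![emb ι A, emb ι B, emb ι C, 1 - emb ι 1] i = 1 := by
    rw [Fin.sum_univ_four]
    show emb ι A + emb ι B + emb ι C + (1 - emb ι 1) = 1
    rw [← emb_add, ← emb_add, hsum]
    abel
  obtain ⟨i, hi, hu⟩ := exists_unique_isTrue F h x _ horth hsum4
  refine ⟨?_, ?_, ?_, ?_⟩
  · fin_cases i
    · exact Or.inl hi
    · exact Or.inr (Or.inl hi)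
    · exact Or.inr (Or.inr hi)
    · exact absurd hi hq
  · rintro ⟨ta, tb⟩
    exact absurd ((hu 0 ta).trans (hu 1 tb).symm) (by decide)
  · rintro ⟨ta, tc⟩
    exact absurd ((hu 0 ta).trans (hu 2 tc).symm) (by decide)
  · rintro ⟨tb, tc⟩
    exact absurd ((hu 1 tb).trans (hu 2 tc).symm) (by decide)

end part3

end NoSpec

open NoSpec Matrix in
/-- If `F` is a contravariant functor from rings to sets whose restriction to the full
subcategory of commutative rings is (naturally) isomorphic to the prime spectrum functor
`Spec`, then `F (Mₙ(ℂ)) = ∅` for every `n ≥ 3`. -/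
theorem empty_spec_of_matrix (F : RingCatᵒᵖ ⥤ Type)
    (h : (forget₂ CommRingCat RingCat).op ⋙ F ≅ SpecFunctor)
    (n : ℕ) (hn : 3 ≤ n) :
    IsEmpty (F.obj (Opposite.op (RingCat.of (Matrix (Fin n) (Fin n) ℂ)))) := by
  constructor
  intro x
  obtain ⟨i0, hi0, -⟩ := exists_unique_isTrue F h x
    (fun i : Fin n => single i i (1 : ℂ))
    (fun i j hij => single_mul_single_of_ne i i j hij 1 (c := 1)) sum_std_diag
  set ι : Fin 3 → Fin n := fun k => (Equiv.swap (Fin.castLE hn 0) i0) (Fin.castLE hn k)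
    with hιdef
  have hι : Function.Injective ι :=
    (Equiv.swap (Fin.castLE hn 0) i0).injective.comp (Fin.castLE_injective hn)
  have hι0 : ι 0 = i0 := Equiv.swap_apply_left _ _
  have hanchor : IsTrue F h x (emb ι KM9) := by
    rw [emb_KM9, hι0]
    exact hi0
  have hq : ¬ IsTrue F h x (1 - emb ι 1) :=
    qFalse F h x ι hι KM9 KM9c (by decide) (by decide) (by decide) hanchor
  have t0 := quadFact F h x ι hι hq KM3 KM1 KM4 (by decide) (by decide) (by decide) (by decide) (by decide) (by decide) (by decide)
  have t1 := quadFact F h x ι hι hq KM3 KM7 KM8 (by decide) (by decide) (by decide) (by decide) (by decide) (by decide) (by decide)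
  have t2 := quadFact F h x ι hι hq KM5 KM7 KM9 (by decide) (by decide) (by decide) (by decide) (by decide) (by decide) (by decide)
  have t3 := quadFact F h x ι hι hq KM17 KM18 KM2 (by decide) (by decide) (by decide) (by decide) (by decide) (by decide) (by decide)
  have t4 := quadFact F h x ι hι hq KM19 KM18 KM4 (by decide) (by decide) (by decide) (by decide) (by decide) (by decide) (by decide)
  have t5 := quadFact F h x ι hι hq KM19 KM21 KM9 (by decide) (by decide) (by decide) (by decide) (by decide) (by decide) (by decide)
  have t6 := quadFact F h x ι hι hq KM17 KM21 KM8 (by decide) (by decide) (by decide) (by decide) (by decide) (by decide) (by decide)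
  have t7 := quadFact F h x ι hι hq KM23 KM24 KM2 (by decide) (by decide) (by decide) (by decide) (by decide) (by decide) (by decide)
  have t8 := quadFact F h x ι hι hq KM17 KM31 KM32 (by decide) (by decide) (by decide) (by decide) (by decide) (by decide) (by decide)
  have t9 := quadFact F h x ι hι hq KM23 KM31 KM33 (by decide) (by decide) (by decide) (by decide) (by decide) (by decide) (by decide)
  have t10 := quadFact F h x ι hι hq KM3 KM41 KM32 (by decide) (by decide) (by decide) (by decide) (by decide) (by decide) (by decide)
  have t11 := quadFact F h x ι hι hq KM59 KM60 KM4 (by decide) (by decide) (by decide) (by decide) (by decide) (by decide) (by decide)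
  have t12 := quadFact F h x ι hι hq KM57 KM60 KM8 (by decide) (by decide) (by decide) (by decide) (by decide) (by decide) (by decide)
  have t13 := quadFact F h x ι hι hq KM59 KM62 KM9 (by decide) (by decide) (by decide) (by decide) (by decide) (by decide) (by decide)
  have t14 := quadFact F h x ι hι hq KM119 KM120 KM2 (by decide) (by decide) (by decide) (by decide) (by decide) (by decide) (by decide)
  have t15 := quadFact F h x ι hι hq KM18 KM127 KM128 (by decide) (by decide) (by decide) (by decide) (by decide) (by decide) (by decide)
  have t16 := quadFact F h x ι hι hq KM119 KM127 KM131 (by decide) (by decide) (by decide) (by decide) (by decide) (by decide) (by decide)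
  have t17 := quadFact F h x ι hι hq KM60 KM128 KM139 (by decide) (by decide) (by decide) (by decide) (by decide) (by decide) (by decide)
  have t18 := quadFact F h x ι hι hq KM75 KM128 KM32 (by decide) (by decide) (by decide) (by decide) (by decide) (by decide) (by decide)
  have t19 := quadFact F h x ι hι hq KM127 KM154 KM33 (by decide) (by decide) (by decide) (by decide) (by decide) (by decide) (by decide)
  have t20 := quadFact F h x ι hι hq KM31 KM158 KM131 (by decide) (by decide) (by decide) (by decide) (by decide) (by decide) (by decide)
  have t21 := quadFact F h x ι hι hq KM41 KM139 KM91 (by decide) (by decide) (by decide) (by decide) (by decide) (by decide) (by decide)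
  have n5_0 : ¬ IsTrue F h x (emb ι KM5) := fun hx => t2.2.2.1 ⟨hx, hanchor⟩
  have n7_1 : ¬ IsTrue F h x (emb ι KM7) := fun hx => t2.2.2.2 ⟨hx, hanchor⟩
  have n19_2 : ¬ IsTrue F h x (emb ι KM19) := fun hx => t5.2.2.1 ⟨hx, hanchor⟩
  have n21_3 : ¬ IsTrue F h x (emb ι KM21) := fun hx => t5.2.2.2 ⟨hx, hanchor⟩
  have n59_4 : ¬ IsTrue F h x (emb ι KM59) := fun hx => t13.2.2.1 ⟨hx, hanchor⟩
  have n62_5 : ¬ IsTrue F h x (emb ι KM62) := fun hx => t13.2.2.2 ⟨hx, hanchor⟩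
  by_cases b3_6 : IsTrue F h x (emb ι KM3)
  · -- branch 3 true
    have n1_7 : ¬ IsTrue F h x (emb ι KM1) := fun hx => t0.2.1 ⟨b3_6, hx⟩
    have n4_8 : ¬ IsTrue F h x (emb ι KM4) := fun hx => t0.2.2.1 ⟨b3_6, hx⟩
    have n8_9 : ¬ IsTrue F h x (emb ι KM8) := fun hx => t1.2.2.1 ⟨b3_6, hx⟩
    have p18_10 : IsTrue F h x (emb ι KM18) := ((t4.1.resolve_left n19_2).resolve_right n4_8)
    have p17_11 : IsTrue F h x (emb ι KM17) := (t6.1.resolve_right (fun hx => hx.elim n21_3 n8_9))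
    have n31_12 : ¬ IsTrue F h x (emb ι KM31) := fun hx => t8.2.1 ⟨p17_11, hx⟩
    have n32_13 : ¬ IsTrue F h x (emb ι KM32) := fun hx => t8.2.2.1 ⟨p17_11, hx⟩
    have n41_14 : ¬ IsTrue F h x (emb ι KM41) := fun hx => t10.2.1 ⟨b3_6, hx⟩
    have p60_15 : IsTrue F h x (emb ι KM60) := ((t11.1.resolve_left n59_4).resolve_right n4_8)
    have n57_16 : ¬ IsTrue F h x (emb ι KM57) := fun hx => t12.2.1 ⟨hx, p60_15⟩
    have n127_17 : ¬ IsTrue F h x (emb ι KM127) := fun hx => t15.2.1 ⟨p18_10, hx⟩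
    have n128_18 : ¬ IsTrue F h x (emb ι KM128) := fun hx => t15.2.2.1 ⟨p18_10, hx⟩
    have n139_19 : ¬ IsTrue F h x (emb ι KM139) := fun hx => t17.2.2.1 ⟨p60_15, hx⟩
    have p75_20 : IsTrue F h x (emb ι KM75) := (t18.1.resolve_right (fun hx => hx.elim n128_18 n32_13))
    have p91_21 : IsTrue F h x (emb ι KM91) := ((t21.1.resolve_left n41_14).resolve_left n139_19)
    exact t3.2.1 ⟨p17_11, p18_10⟩
  · -- branch 3 false
    have p8_22 : IsTrue F h x (emb ι KM8) := ((t1.1.resolve_left b3_6).resolve_left n7_1)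
    have n17_23 : ¬ IsTrue F h x (emb ι KM17) := fun hx => t6.2.2.1 ⟨hx, p8_22⟩
    have n57_24 : ¬ IsTrue F h x (emb ι KM57) := fun hx => t12.2.2.1 ⟨hx, p8_22⟩
    have n60_25 : ¬ IsTrue F h x (emb ι KM60) := fun hx => t12.2.2.2 ⟨hx, p8_22⟩
    have p4_26 : IsTrue F h x (emb ι KM4) := ((t11.1.resolve_left n59_4).resolve_left n60_25)
    have n1_27 : ¬ IsTrue F h x (emb ι KM1) := fun hx => t0.2.2.2 ⟨hx, p4_26⟩
    have n18_28 : ¬ IsTrue F h x (emb ι KM18) := fun hx => t4.2.2.2 ⟨hx, p4_26⟩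
    have p2_29 : IsTrue F h x (emb ι KM2) := ((t3.1.resolve_left n17_23).resolve_left n18_28)
    have n23_30 : ¬ IsTrue F h x (emb ι KM23) := fun hx => t7.2.2.1 ⟨hx, p2_29⟩
    have n24_31 : ¬ IsTrue F h x (emb ι KM24) := fun hx => t7.2.2.2 ⟨hx, p2_29⟩
    have n119_32 : ¬ IsTrue F h x (emb ι KM119) := fun hx => t14.2.2.1 ⟨hx, p2_29⟩
    have n120_33 : ¬ IsTrue F h x (emb ι KM120) := fun hx => t14.2.2.2 ⟨hx, p2_29⟩
    by_cases b31_34 : IsTrue F h x (emb ι KM31)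
    · -- branch 31 true
      have n32_35 : ¬ IsTrue F h x (emb ι KM32) := fun hx => t8.2.2.2 ⟨b31_34, hx⟩
      have n33_36 : ¬ IsTrue F h x (emb ι KM33) := fun hx => t9.2.2.2 ⟨b31_34, hx⟩
      have p41_37 : IsTrue F h x (emb ι KM41) := ((t10.1.resolve_left b3_6).resolve_right n32_35)
      have n158_38 : ¬ IsTrue F h x (emb ι KM158) := fun hx => t20.2.1 ⟨b31_34, hx⟩
      have n131_39 : ¬ IsTrue F h x (emb ι KM131) := fun hx => t20.2.2.1 ⟨b31_34, hx⟩
      have n139_40 : ¬ IsTrue F h x (emb ι KM139) := fun hx => t21.2.1 ⟨p41_37, hx⟩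
      have n91_41 : ¬ IsTrue F h x (emb ι KM91) := fun hx => t21.2.2.1 ⟨p41_37, hx⟩
      have p127_42 : IsTrue F h x (emb ι KM127) := ((t16.1.resolve_left n119_32).resolve_right n131_39)
      have p128_43 : IsTrue F h x (emb ι KM128) := ((t17.1.resolve_left n60_25).resolve_right n139_40)
      have n75_44 : ¬ IsTrue F h x (emb ι KM75) := fun hx => t18.2.1 ⟨hx, p128_43⟩
      have n154_45 : ¬ IsTrue F h x (emb ι KM154) := fun hx => t19.2.1 ⟨p127_42, hx⟩
      exact t15.2.2.2 ⟨p127_42, p128_43⟩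
    · -- branch 31 false
      have p32_46 : IsTrue F h x (emb ι KM32) := ((t8.1.resolve_left n17_23).resolve_left b31_34)
      have p33_47 : IsTrue F h x (emb ι KM33) := ((t9.1.resolve_left n23_30).resolve_left b31_34)
      have n41_48 : ¬ IsTrue F h x (emb ι KM41) := fun hx => t10.2.2.2 ⟨hx, p32_46⟩
      have n75_49 : ¬ IsTrue F h x (emb ι KM75) := fun hx => t18.2.2.1 ⟨hx, p32_46⟩
      have n128_50 : ¬ IsTrue F h x (emb ι KM128) := fun hx => t18.2.2.2 ⟨hx, p32_46⟩
      have n127_51 : ¬ IsTrue F h x (emb ι KM127) := fun hx => t19.2.2.1 ⟨hx, p33_47⟩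
      have n154_52 : ¬ IsTrue F h x (emb ι KM154) := fun hx => t19.2.2.2 ⟨hx, p33_47⟩
      exact n128_50 ((t15.1.resolve_left n18_28).resolve_left n127_51)
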